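/- For any positive rational number n/m with n, m prime, and any integer N0 ≥ 2, there exists a sequence of pairs of coprime positive integers (n_k, m_k) with n_k ≥ 2, m_k ≥ N0, n_k + m_k ≡ 0, 1, or 2 (mod 5), such that n_k/m_k converges to n/m. In particular, the set of rationals n/m with n, m coprime, n ≥ 2, m ≥ N0 and (n+m) mod 5 ≤ 2 is dense in (0, ∞). -/

import Mathlib

open Filter

lemma key_approx (N0 : ℕ) (x ε : ℝ) (hx : 0 < x) (hε : 0 < ε) :
    ∃ a b : ℕ, Nat.Coprime a b ∧ 2 ≤ a ∧ N0 ≤ b ∧ (a + b) % 5 ≤ 2 ∧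
      |(a : ℝ) / (b : ℝ) - x| < ε := by
  obtain ⟨B, hB⟩ := exists_nat_gt (max (7 / ε) (1 / x))
  obtain ⟨b, hble, hbp⟩ := Nat.exists_infinite_primes (max B N0 + 7)
  have hbB : (B : ℝ) ≤ b := by exact_mod_cast le_trans (le_max_left B N0) (by omega)
  have hbN0 : N0 ≤ b := le_trans (le_max_right B N0) (by omega)
  have hb7 : 7 ≤ b := by omega
  have hbpos : (0:ℝ) < b := by positivity
  have hbe : 7 / ε < (b:ℝ) := lt_of_le_of_lt (le_max_left _ _) (lt_of_lt_of_le hB hbB)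
  have hbx : 1 / x < (b:ℝ) := lt_of_le_of_lt (le_max_right _ _) (lt_of_lt_of_le hB hbB)
  have hxb1 : 1 < x * b := by
    rw [div_lt_iff₀ hx] at hbx; linarith [mul_comm x (b:ℝ)]
  set c : ℕ := ⌊x * b⌋₊ + 1 with hc
  have hcgt : x * b < c := by
    push_cast [hc]; exact Nat.lt_floor_add_one _
  have hcle : (c : ℝ) ≤ x * b + 1 := by
    push_cast [hc]; linarith [Nat.floor_le (by positivity : (0:ℝ) ≤ x * b)]
  have hc2 : 2 ≤ c := by
    have : 1 ≤ ⌊x * b⌋₊ := Nat.le_floor (by exact_mod_cast hxb1.le)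
    omega
  set j0 : ℕ := (5 - (c + b) % 5) % 5 with hj0
  have h5 : (c + j0 + b) % 5 = 0 := by omega
  have hj0lt : j0 < 5 := by omega
  set a : ℕ := if b ∣ (c + j0) then c + j0 + 1 else c + j0 with ha
  have hnd : ¬ b ∣ a := by
    rw [ha]
    split_ifs with h
    · intro h2
      have := Nat.le_of_dvd one_pos (by simpa using Nat.dvd_sub h2 h)
      omega
    · exact h
  have hcop : Nat.Coprime a b := (hbp.coprime_iff_not_dvd.mpr hnd).symm
  have ha2 : 2 ≤ a := by rw [ha]; split_ifs <;> omega
  have hares : (a + b) % 5 ≤ 2 := by rw [ha]; split_ifs <;> omega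
  have halo : (c : ℝ) ≤ a := by
    have : c ≤ a := by rw [ha]; split_ifs <;> omega
    exact_mod_cast this
  have hahi : (a : ℝ) ≤ c + 5 := by
    have : a ≤ c + 5 := by rw [ha]; split_ifs <;> omega
    exact_mod_cast this
  refine ⟨a, b, hcop, ha2, hbN0, hares, ?_⟩
  have h7 : 7 < ε * b := by
    rw [div_lt_iff₀ hε] at hbe; linarith [mul_comm ε (b:ℝ)]
  rw [abs_sub_lt_iff]
  constructor
  · rw [div_sub' (ne_of_gt hbpos), div_lt_iff₀ hbpos]
    nlinarith
  · have : x < (a:ℝ) / b := by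
      rw [lt_div_iff₀ hbpos]; nlinarith
    linarith

theorem stmt_0 (n m : ℕ) (hn : n.Prime) (hm : m.Prime) (N0 : ℕ) (hN0 : 2 ≤ N0) :
    (∃ a b : ℕ → ℕ,
      (∀ k, Nat.Coprime (a k) (b k) ∧ 2 ≤ a k ∧ N0 ≤ b k ∧ (a k + b k) % 5 ≤ 2) ∧
      Tendsto (fun k => (a k : ℝ) / (b k : ℝ)) atTop (nhds ((n : ℝ) / (m : ℝ)))) ∧
    (∀ x : ℝ, 0 < x →
      x ∈ closure {q : ℝ | ∃ a b : ℕ, Nat.Coprime a b ∧ 2 ≤ a ∧ N0 ≤ b ∧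
        (a + b) % 5 ≤ 2 ∧ q = (a : ℝ) / (b : ℝ)}) := by
  constructor
  · have hx : (0:ℝ) < (n:ℝ) / m := by
      have := hn.two_le; have := hm.two_le
      apply div_pos <;> [skip; skip] <;> exact_mod_cast by omega
    have H : ∀ k : ℕ, ∃ a b : ℕ, Nat.Coprime a b ∧ 2 ≤ a ∧ N0 ≤ b ∧ (a + b) % 5 ≤ 2 ∧
        |(a : ℝ) / (b : ℝ) - (n:ℝ)/m| < 1 / (k + 1) := fun k =>
      key_approx N0 _ _ hx (by positivity)
    choose a b h1 h2 h3 h4 h5 using H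
    refine ⟨a, b, fun k => ⟨h1 k, h2 k, h3 k, h4 k⟩, ?_⟩
    rw [tendsto_iff_dist_tendsto_zero]
    apply squeeze_zero (fun k => dist_nonneg) (fun k => ?_)
      tendsto_one_div_add_atTop_nhds_zero_nat
    rw [Real.dist_eq]
    exact (h5 k).le
  · intro x hx
    rw [Metric.mem_closure_iff]
    intro ε hε
    obtain ⟨a, b, hc, h2, h3, h4, h5⟩ := key_approx N0 x ε hx hε
    exact ⟨(a:ℝ)/b, ⟨a, b, hc, h2, h3, h4, rfl⟩, by rw [Real.dist_eq, abs_sub_comm]; exact h5⟩
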